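/- Let k be a field, A a finite-dimensional k-algebra, M a right A-module of k-dimension n given by the structure map f: A → M_n(k), and I_f the ideal of the free algebra k⟨(v_{ij})_{i,j=1}^n⟩ generated by the entries of V·f(a) − f(a)·V for all a ∈ A (V = (v_{ij})). If λ_{ij} ∈ k are scalars such that Σ_{i,j} λ_{ij} m_{ij} = 0 for every matrix (m_{ij}) ∈ M_n(k) that commutes with all f(a), a ∈ A (i.e. every A-endomorphism of M ≅ kⁿ), then Σ_{i,j} λ_{ij} v_{ij} ∈ I_f. -/

import Mathlib

universe u

/-- The ideal `I_f ⊆ k⟨(v_{ij})⟩`: the two-sided ideal of the free algebra on the `n²`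
generators `v_{ij}` generated by the entries of the commutators `V·f(a) − f(a)·V`, `a : A`. -/
def commutatorIdeal {k A : Type u} [Field k] [Ring A] [Algebra k A] {n : ℕ}
    (f : A →ₐ[k] Matrix (Fin n) (Fin n) k) :
    TwoSidedIdeal (FreeAlgebra k (Fin n × Fin n)) :=
  TwoSidedIdeal.span
    {x | ∃ (a : A) (i j : Fin n),
      x = ∑ l, FreeAlgebra.ι k (i, l) * algebraMap k (FreeAlgebra k (Fin n × Fin n)) (f a l j)
        - ∑ l, algebraMap k (FreeAlgebra k (Fin n × Fin n)) (f a i l) * FreeAlgebra.ι k (l, j)}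

/-- **Proposition `PIdealRelations`.** Let `A` be a finite-dimensional
`k`-algebra and `M = kⁿ` a right `A`-module with structure map `f : A → Mₙ(k)`. If scalars
`λ_{ij}` satisfy `Σ λ_{ij}·m_{ij} = 0` for every matrix `(m_{ij})` commuting with all `f(a)`
(i.e. every `A`-endomorphism of `M`), then `Σ λ_{ij}·v_{ij}` lies in the ideal `I_f` of the
free algebra `k⟨v_{ij}⟩`. -/
theorem stmt14 {k A : Type u} [Field k] [Ring A] [Algebra k A] [FiniteDimensional k A] {n : ℕ}
    (f : A →ₐ[k] Matrix (Fin n) (Fin n) k)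
    (lam : Fin n → Fin n → k)
    (hlam : ∀ m : Matrix (Fin n) (Fin n) k,
      (∀ a : A, m * f a = f a * m) → ∑ i, ∑ j, lam i j * m i j = 0) :
    ∑ i, ∑ j, lam i j • FreeAlgebra.ι k ((i, j) : Fin n × Fin n) ∈ commutatorIdeal f := by
  classical
  set Mk := Matrix (Fin n) (Fin n) k
  set ψ : A → Fin n → Fin n → Module.Dual k Mk := fun a i j =>
    Matrix.entryLinearMap k k i j ∘ₗ (LinearMap.mulRight k (f a) - LinearMap.mulLeft k (f a))
    with hψ
  set S : Set (Module.Dual k Mk) := ⋃ a, ⋃ i, ⋃ j, {ψ a i j} with hS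
  set Λ : Module.Dual k Mk := ∑ i, ∑ j, lam i j • Matrix.entryLinearMap k k i j with hΛ
  have hΛapp : ∀ m : Mk, Λ m = ∑ i, ∑ j, lam i j * m i j := by
    intro m
    simp [hΛ, LinearMap.sum_apply, Matrix.entryLinearMap_apply, smul_eq_mul]
    rfl
  have hΛW : Λ ∈ Submodule.span k S := by
    rw [← Subspace.dualCoannihilator_dualAnnihilator_eq (W := Submodule.span k S),
      Submodule.mem_dualAnnihilator]
    intro m hm
    rw [Submodule.mem_dualCoannihilator] at hm
    have hcomm : ∀ a : A, m * f a = f a * m := by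
      intro a
      ext i j
      have := hm (ψ a i j) (Submodule.subset_span (by simp [hS]))
      simpa [hψ, sub_eq_zero, Matrix.entryLinearMap_apply] using this
    rw [hΛapp]
    exact hlam m hcomm
  -- the linearization map
  set T : Module.Dual k Mk →ₗ[k] FreeAlgebra k (Fin n × Fin n) :=
    ∑ p, ∑ q, (LinearMap.applyₗ (Matrix.single p q (1:k))).smulRight
      (FreeAlgebra.ι k ((p, q) : Fin n × Fin n)) with hT
  have hTapp : ∀ φ : Module.Dual k Mk,
      T φ = ∑ p, ∑ q, φ (Matrix.single p q 1) • FreeAlgebra.ι k ((p, q) : Fin n × Fin n) := by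
    intro φ
    simp [hT, LinearMap.sum_apply]
  have hTΛ : T Λ = ∑ i, ∑ j, lam i j • FreeAlgebra.ι k ((i, j) : Fin n × Fin n) := by
    rw [hTapp]
    congr 1; ext p; congr 1; ext q
    congr 1
    rw [hΛapp]
    simp [Matrix.single, ite_and, Finset.sum_ite_eq]
  have hTψ : ∀ (a : A) (i j : Fin n), T (ψ a i j) ∈ commutatorIdeal f := by
    intro a i j
    have key : T (ψ a i j) =
        ∑ l, FreeAlgebra.ι k ((i, l) : Fin n × Fin n)
            * algebraMap k (FreeAlgebra k (Fin n × Fin n)) (f a l j)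
          - ∑ l, algebraMap k (FreeAlgebra k (Fin n × Fin n)) (f a i l)
            * FreeAlgebra.ι k ((l, j) : Fin n × Fin n) := by
      rw [hTapp]
      have e1 : ∀ p q : Fin n, (Matrix.single p q (1:k) * f a) i j
          = if p = i then f a q j else 0 := by
        intro p q
        simp [Matrix.mul_apply, Matrix.single, ite_and, Finset.sum_ite_eq]
      have e2 : ∀ p q : Fin n, (f a * Matrix.single p q (1:k)) i j
          = if q = j then f a i p else 0 := by
        intro p q
        simp [Matrix.mul_apply, Matrix.single, ite_and, Finset.sum_ite_eq]
      have : ∀ p q : Fin n, (ψ a i j) (Matrix.single p q (1:k))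
          = (if p = i then f a q j else 0) - (if q = j then f a i p else 0) := by
        intro p q
        simp only [hψ, LinearMap.comp_apply, LinearMap.sub_apply, LinearMap.mulRight_apply,
          LinearMap.mulLeft_apply, Matrix.entryLinearMap_apply, LinearMap.coe_mk, AddHom.coe_mk,
          Matrix.sub_apply, e1, e2]
      simp only [this, sub_smul, ite_smul, zero_smul, Finset.sum_sub_distrib,
        Finset.sum_ite_eq, Finset.mem_univ, if_true]
      congr 1
      · rw [Finset.sum_comm]
        refine Finset.sum_congr rfl fun q _ => ?_
        rw [Finset.sum_ite_eq', if_pos (Finset.mem_univ i)]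
        rw [Algebra.smul_def, Algebra.commutes]
      · refine Finset.sum_congr rfl fun p _ => ?_
        rw [Finset.sum_ite_eq', if_pos (Finset.mem_univ j), Algebra.smul_def]
    rw [key]
    exact TwoSidedIdeal.subset_span ⟨a, i, j, rfl⟩
  rw [← hTΛ]
  refine Submodule.span_induction (p := fun φ _ => T φ ∈ commutatorIdeal f) ?_ ?_ ?_ ?_ hΛW
  · intro x hx
    simp only [hS, Set.mem_iUnion, Set.mem_singleton_iff] at hx
    obtain ⟨a, i, j, rfl⟩ := hx
    exact hTψ a i j
  · simp only [map_zero]; exact (commutatorIdeal f).zero_mem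
  · intro x y _ _ hx hy
    rw [map_add]; exact (commutatorIdeal f).add_mem hx hy
  · intro c x _ hx
    rw [map_smul, Algebra.smul_def]
    exact (commutatorIdeal f).mul_mem_left _ _ hx
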